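/- For each m > 0, the language B_m = {a^k : the (k mod' 2^m)-th letter of the de Bruijn word w_m of order m is 1} is properly 2^m-cyclic, where x mod' y = x mod y if x mod y > 0 and y otherwise. -/

import Mathlib

lemma modp_succ (N a : ℕ) (hN : 1 < N) :
    (if (a + 1) % N = 0 then N else (a + 1) % N) - 1 = a % N := by
  have hN0 : 0 < N := by omega
  have hr : a % N < N := Nat.mod_lt _ hN0
  have h1 : (a + 1) % N = (a % N + 1) % N := by
    conv_lhs => rw [Nat.add_mod, Nat.one_mod_eq_one.mpr (by omega)]
  rcases Nat.lt_or_ge (a % N + 1) N with h | h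
  · rw [h1, Nat.mod_eq_of_lt h, if_neg (by omega)]
    omega
  · have he : a % N + 1 = N := by omega
    rw [h1, he, Nat.mod_self, if_pos rfl]
    omega

/-- let `w` be a de Bruijn word of order `m` over `{0,1}`: it has
length `2^m + m - 1`, every binary word of length `m` occurs exactly once as a
factor of `w`, and the prefix and suffix of `w` of length `m - 1` coincide.
Then the language `B_m = {a^k : the (k mod' 2^m)-th letter of w is 1}` (letters
indexed from 1, `x mod' y = x % y` if `x % y > 0` and `y` otherwise) is
properly `2^m`-cyclic. -/
theorem stmt_19 (m : ℕ) (hm : 0 < m) (w : List Bool)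
    (hlen : w.length = 2 ^ m + m - 1)
    (huniq : ∀ u : List Bool, u.length = m →
      ∃! i : ℕ, i + m ≤ w.length ∧ (w.drop i).take m = u)
    (hps : w.take (m - 1) = w.drop (2 ^ m)) :
    (∀ k : ℕ,
      (w.getD ((if k % 2 ^ m = 0 then 2 ^ m else k % 2 ^ m) - 1) false = true) ↔
      (w.getD ((if (k + 2 ^ m) % 2 ^ m = 0 then 2 ^ m
        else (k + 2 ^ m) % 2 ^ m) - 1) false = true)) ∧
    (∀ l, 1 ≤ l → l < 2 ^ m →
      ¬ (∀ k : ℕ,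
        (w.getD ((if k % 2 ^ m = 0 then 2 ^ m else k % 2 ^ m) - 1) false
          = true) ↔
        (w.getD ((if (k + l) % 2 ^ m = 0 then 2 ^ m
          else (k + l) % 2 ^ m) - 1) false = true))) := by
  set N := 2 ^ m with hN
  have hN2 : 2 ≤ N := by
    calc 2 = 2 ^ 1 := rfl
    _ ≤ 2 ^ m := Nat.pow_le_pow_right (by norm_num) hm
  have hmN : m ≤ N := Nat.le_of_lt (Nat.lt_two_pow_self (n := m))
  have hlen' : w.length = N + (m - 1) := by omega
  -- wrap-around: for t < m - 1, w[N + t] = w[t]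
  have hwrap : ∀ t (ht : t < m - 1), ∀ (h1 : N + t < w.length) (h2 : t < w.length),
      w[N + t] = w[t] := by
    intro t ht h1 h2
    have e1 : (w.take (m - 1))[t]'(by simp [hlen']; omega) = w[t] :=
      List.getElem_take
    have e2 : (w.drop N)[t]'(by simp [hlen']; omega) = w[N + t] :=
      List.getElem_drop
    rw [← e1, ← e2]
    congr 1
    exact hps.symm
  constructor
  · intro k
    rw [Nat.add_mod_right]
  · intro l hl1 hlN hper
    -- cyclic period: for i < N, w[i] = w[(i + l) % N]
    have hcyc : ∀ i, i < N → ∀ (h1 : i < w.length) (h2 : (i + l) % N < w.length),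
        w[i] = w[(i + l) % N] := by
      intro i hi h1 h2
      have hk := hper (i + 1)
      rw [show i + 1 + l = i + l + 1 from by ring] at hk
      rw [modp_succ N i hN2, modp_succ N (i + l) hN2,
        Nat.mod_eq_of_lt hi] at hk
      rw [List.getD_eq_getElem w false h1, List.getD_eq_getElem w false h2] at hk
      revert hk
      cases w[i] <;> cases w[(i + l) % N] <;> simp
    -- the factor at position l equals the factor at position 0
    have hfac : (w.drop l).take m = (w.drop 0).take m := by
      apply List.ext_getElem
      · simp [hlen']; omega
      · intro j hj1 hj2
        have hj : j < m := by simp at hj1; omega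
        rw [List.getElem_take, List.getElem_take, List.getElem_drop,
          List.getElem_drop]
        simp only [Nat.zero_add]
        have hjN : j < N := lt_of_lt_of_le hj hmN
        have hjl : j + l < w.length := by omega
        have h2 : (j + l) % N < w.length := by
          have := Nat.mod_lt (j + l) (show 0 < N by omega); omega
        have base := hcyc j hjN (by omega) h2
        rcases Nat.lt_or_ge (j + l) N with hc | hc
        · simp only [Nat.mod_eq_of_lt hc] at base
          simp only [show l + j = j + l from by ring]
          exact base.symm
        · have hm2 : (j + l) % N = j + l - N := by
            rw [Nat.mod_eq_sub_mod (by omega), Nat.mod_eq_of_lt (by omega)]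
          have hwr : w[N + (j + l - N)]'(by omega) = w[j + l - N]'(by omega) :=
            hwrap (j + l - N) (by omega) (by omega) (by omega)
          simp only [hm2] at base
          simp only [show l + j = N + (j + l - N) from by omega]
          rw [hwr]
          exact base.symm
    -- uniqueness forces l = 0
    obtain ⟨i, _, hiu⟩ := huniq ((w.drop 0).take m) (by simp [hlen']; omega)
    have h0 : i = 0 := (hiu 0 ⟨by omega, rfl⟩).symm
    have hli : l = i := hiu l ⟨by omega, hfac⟩
    omega
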